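/- If a system of m congruences (L_i, R_i), 1 ≤ i ≤ m, on {1,…,r} has a quasi-solution in S² consisting of nonempty open sets, with the witnessing maps taken from the group of isometries of S², then the system is consistent. -/

import Mathlib

open Set

/-- Congruences deducible from a set of congruence pairs on `{1,…,r}` (encoded as `Fin r`):
closure under symmetry, complementation and transitivity. -/
inductive CongDed {r : ℕ} (S : Set (Set (Fin r) × Set (Fin r))) :
    Set (Fin r) → Set (Fin r) → Prop
  | base {A B : Set (Fin r)} : (A, B) ∈ S → CongDed S A B
  | symm {A B : Set (Fin r)} : CongDed S A B → CongDed S B A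
  | compl {A B : Set (Fin r)} : CongDed S A B → CongDed S Aᶜ Bᶜ
  | trans {A B C : Set (Fin r)} : CongDed S A B → CongDed S B C → CongDed S A C

/-- The system of congruences `(L i, R i)` is weak: no congruence between a set and its
complement is deducible from it. -/
def SysWeak {r m : ℕ} (L R : Fin m → Set (Fin r)) : Prop :=
  ∀ A : Set (Fin r), ¬ CongDed {p | ∃ i, p = (L i, R i)} A Aᶜ

/-- The system is nonredundant: no congruence of the system is deducible from the system with
that congruence removed, and there is no identity congruence. -/
def SysNonredundant {r m : ℕ} (L R : Fin m → Set (Fin r)) : Prop :=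
  (∀ i, ¬ CongDed {p | ∃ j, j ≠ i ∧ p = (L j, R j)} (L i) (R i)) ∧ ∀ i, L i ≠ R i

/-- Subcongruences deducible from the system. -/
inductive SubCong {r m : ℕ} (L R : Fin m → Set (Fin r)) :
    Set (Fin r) → Set (Fin r) → Prop
  | subset {A B : Set (Fin r)} : A ⊆ B → SubCong L R A B
  | trans {A B C : Set (Fin r)} : SubCong L R A B → SubCong L R B C → SubCong L R A C
  | lr (i : Fin m) : SubCong L R (L i) (R i)
  | rl (i : Fin m) : SubCong L R (R i) (L i)
  | lrc (i : Fin m) : SubCong L R (L i)ᶜ (R i)ᶜ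
  | rlc (i : Fin m) : SubCong L R (R i)ᶜ (L i)ᶜ

/-- The system is consistent: there is no deducible subcongruence `L ⪯ R` with `R` a proper
subset of `L`. -/
def SysConsistent {r m : ℕ} (L R : Fin m → Set (Fin r)) : Prop :=
  ∀ A B : Set (Fin r), SubCong L R A B → ¬ B ⊂ A

/-- All congruences of the system are proper. -/
def SysProper {r m : ℕ} (L R : Fin m → Set (Fin r)) : Prop :=
  ∀ i, (L i).Nonempty ∧ L i ≠ univ ∧ (R i).Nonempty ∧ R i ≠ univ
noncomputable section

/-- Euclidean 3-space. -/
abbrev E3 := EuclideanSpace ℝ (Fin 3)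

/-- The unit sphere `S²` in `ℝ³`. -/
def S2 : Set E3 := Metric.sphere 0 1

/-- The self-map of `S²` obtained by restricting a linear isometry equivalence of `ℝ³`
(an element of O(3)); such restrictions are exactly the isometries of `S²`. -/
def sphereMap (f : E3 ≃ₗᵢ[ℝ] E3) (x : S2) : S2 :=
  ⟨f x.1, by
    have hx : ‖(x : E3)‖ = 1 := by simpa [S2, mem_sphere_zero_iff_norm] using x.2
    simp [S2, mem_sphere_zero_iff_norm, f.norm_map, hx]⟩

/-- An element of O(3) is a rotation iff it has determinant 1 (i.e. lies in SO(3)). -/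
def IsRotation (f : E3 ≃ₗᵢ[ℝ] E3) : Prop :=
  LinearMap.det (f.toLinearEquiv : E3 →ₗ[ℝ] E3) = 1

end

instance : CompactSpace S2 :=
  isCompact_iff_compactSpace.mp (isCompact_sphere (0 : E3) 1)

instance : CompleteSpace S2 :=
  IsClosed.completeSpace_coe (hs := Metric.isClosed_sphere (x := (0:E3)) (ε := 1))

noncomputable def sphereIso (σ : E3 ≃ₗᵢ[ℝ] E3) : S2 ≃ᵢ S2 where
  toFun := sphereMap σ
  invFun := sphereMap σ.symm
  left_inv x := Subtype.ext (σ.symm_apply_apply x.1)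
  right_inv x := Subtype.ext (σ.apply_symm_apply x.1)
  isometry_toFun := Isometry.of_dist_eq fun x y => by
    rw [Subtype.dist_eq, Subtype.dist_eq]
    exact σ.dist_map x.1 y.1

lemma sphereMap_bijective (σ : E3 ≃ₗᵢ[ℝ] E3) : Function.Bijective (sphereMap σ) :=
  (sphereIso σ).toEquiv.bijective

lemma IsMeagre.union' {X : Type*} [TopologicalSpace X] {s t : Set X}
    (hs : IsMeagre s) (ht : IsMeagre t) : IsMeagre (s ∪ t) := by
  rw [IsMeagre, Set.compl_union]; exact Filter.inter_mem hs ht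

lemma isMeagre_image_sphereMap (σ : E3 ≃ₗᵢ[ℝ] E3) {s : Set S2} (hs : IsMeagre s) :
    IsMeagre (sphereMap σ '' s) := by
  have h := hs.preimage_of_isOpenMap (sphereIso σ).toHomeomorph.symm.continuous
    (sphereIso σ).toHomeomorph.symm.isOpenMap
  rwa [Homeomorph.preimage_symm, show ⇑(sphereIso σ).toHomeomorph = sphereMap σ from rfl] at h

lemma not_isMeagre_open {X : Type*} [TopologicalSpace X] [BaireSpace X]
    {s : Set X} (ho : IsOpen s) (hne : s.Nonempty) : ¬ IsMeagre s := by
  intro h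
  have hd : Dense sᶜ := dense_of_mem_residual h
  obtain ⟨y, hy1, hy2⟩ := hd.exists_mem_open ho hne
  exact hy1 hy2

lemma isMeagre_iUnion' {X ι : Type*} [TopologicalSpace X] [Countable ι] {s : ι → Set X}
    (hs : ∀ i, IsMeagre (s i)) : IsMeagre (⋃ i, s i) := by
  rw [IsMeagre, Set.compl_iUnion]
  exact (countable_iInter_mem).mpr hs

lemma key_iso {X : Type*} [MetricSpace X] [CompactSpace X] {f : X → X}
    (hf : Isometry f) {Y Z : Set X} (hZc : IsClosed Z)
    (h1 : f '' Y ⊆ Z) (h2 : Z ⊆ Y) : Y ⊆ Z := by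
  intro y hy
  have hiter : ∀ n : ℕ, f^[n + 1] y ∈ Z := by
    intro n
    induction n with
    | zero => exact h1 ⟨y, hy, rfl⟩
    | succ n ih =>
      rw [Function.iterate_succ_apply']
      exact h1 ⟨_, h2 ih, rfl⟩
  have hiso : ∀ n : ℕ, Isometry (f^[n]) := by
    intro n
    induction n with
    | zero => simpa using isometry_id
    | succ n ih => rw [Function.iterate_succ'] ; exact hf.comp ih
  obtain ⟨p, -, φ, hφ, hconv⟩ :=
    isCompact_univ.tendsto_subseq (x := fun n => f^[n + 1] y) (fun n => Set.mem_univ _)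
  have hc : CauchySeq fun n => f^[φ n + 1] y := hconv.cauchySeq
  rw [← hZc.closure_eq, Metric.mem_closure_iff]
  intro ε hε
  obtain ⟨N, hN⟩ := Metric.cauchySeq_iff.mp hc ε hε
  have hlt : φ N < φ (N+1) := hφ (by omega)
  refine ⟨f^[φ (N + 1) - φ N] y, ?_, ?_⟩
  · have h : φ (N+1) - φ N = (φ (N+1) - φ N - 1) + 1 := by omega
    rw [h]; exact hiter _
  · have heq : f^[φ N + 1] (f^[φ (N+1) - φ N] y) = f^[φ (N+1) + 1] y := by
      rw [← Function.iterate_add_apply]; congr 1; omega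
    have hdist : dist y (f^[φ (N+1) - φ N] y)
        = dist (f^[φ N + 1] y) (f^[φ (N+1) + 1] y) := by
      rw [← heq]
      exact ((hiso (φ N + 1)).dist_eq _ _).symm
    rw [hdist]
    exact hN N le_rfl (N+1) (Nat.le_succ N)

/-- The union of the pieces indexed by `B`. -/
def UU {r : ℕ} (A : Fin r → Set S2) (B : Set (Fin r)) : Set S2 := ⋃ k ∈ B, A k

lemma UU_mono {r : ℕ} {A : Fin r → Set S2} {B C : Set (Fin r)} (h : B ⊆ C) :
    UU A B ⊆ UU A C :=
  Set.biUnion_subset_biUnion_left h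

lemma isOpen_UU {r : ℕ} {A : Fin r → Set S2} (hopen : ∀ k, IsOpen (A k)) (B : Set (Fin r)) :
    IsOpen (UU A B) :=
  isOpen_biUnion fun k _ => hopen k

lemma meagre_UU_inter {r : ℕ} {A : Fin r → Set S2}
    (hqd : ∀ k k', k ≠ k' → IsMeagre (A k ∩ A k'))
    {B C : Set (Fin r)} (h : Disjoint B C) : IsMeagre (UU A B ∩ UU A C) := by
  have hbig : IsMeagre (⋃ p : Fin r × Fin r,
      (if p.1 = p.2 then (∅ : Set S2) else A p.1 ∩ A p.2)) := by
    refine isMeagre_iUnion' fun p => ?_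
    by_cases hp : p.1 = p.2
    · simp [hp, IsMeagre.empty]
    · simpa [hp] using hqd p.1 p.2 hp
  refine hbig.mono ?_
  rintro x ⟨hx1, hx2⟩
  simp only [UU, mem_iUnion] at hx1 hx2
  obtain ⟨k, hk, hxk⟩ := hx1
  obtain ⟨j, hj, hxj⟩ := hx2
  have hkj : k ≠ j := fun h' => (Set.disjoint_left.mp h hk) (h' ▸ hj)
  refine mem_iUnion.mpr ⟨(k, j), ?_⟩
  simp [hkj]
  exact ⟨hxk, hxj⟩

lemma meagre_cover_compl {r : ℕ} {A : Fin r → Set S2}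
    (hcover : (⋃ k, A k) ∈ residual S2) : IsMeagre ((⋃ k, A k)ᶜ) := by
  rw [IsMeagre, compl_compl]; exact hcover

lemma witness_diffs {r : ℕ} {A : Fin r → Set S2}
    (hqd : ∀ k k', k ≠ k' → IsMeagre (A k ∩ A k'))
    (hcover : (⋃ k, A k) ∈ residual S2)
    (P Q : Set (Fin r)) (σ : E3 ≃ₗᵢ[ℝ] E3)
    (h : IsMeagre (symmDiff (sphereMap σ '' UU A P) (UU A Q))) :
    IsMeagre (sphereMap σ '' UU A P \ UU A Q) ∧
    IsMeagre (sphereMap σ '' UU A Pᶜ \ UU A Qᶜ) := by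
  rw [Set.symmDiff_def] at h
  constructor
  · exact h.mono Set.subset_union_left
  · have hM1 : IsMeagre (sphereMap σ '' (UU A Pᶜ ∩ UU A P)) :=
      isMeagre_image_sphereMap σ (meagre_UU_inter hqd disjoint_compl_left)
    have hM2 : IsMeagre (UU A Q \ sphereMap σ '' UU A P) := h.mono Set.subset_union_right
    have hM3 : IsMeagre ((⋃ k, A k)ᶜ) := meagre_cover_compl hcover
    have hsub : sphereMap σ '' UU A Pᶜ \ UU A Qᶜ ⊆
        (UU A Q \ sphereMap σ '' UU A P) ∪ ((⋃ k, A k)ᶜ) ∪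
          (sphereMap σ '' (UU A Pᶜ ∩ UU A P)) := by
      rintro x ⟨⟨y, hy, rfl⟩, hxQ⟩
      by_cases h1 : y ∈ UU A P
      · exact Or.inr ⟨y, ⟨hy, h1⟩, rfl⟩
      · have h2 : sphereMap σ y ∉ sphereMap σ '' UU A P := by
          rintro ⟨z, hz, hz'⟩
          exact h1 (((sphereMap_bijective σ).1 hz') ▸ hz)
        by_cases h3 : sphereMap σ y ∈ UU A Q
        · exact Or.inl (Or.inl ⟨h3, h2⟩)
        · refine Or.inl (Or.inr ?_)
          intro hmem
          obtain ⟨k, hk⟩ := mem_iUnion.mp hmem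
          by_cases hkQ : k ∈ Q
          · exact h3 (mem_iUnion.mpr ⟨k, mem_iUnion.mpr ⟨hkQ, hk⟩⟩)
          · exact hxQ (mem_iUnion.mpr ⟨k, mem_iUnion.mpr ⟨hkQ, hk⟩⟩)
    exact ((hM2.union' hM3).union' hM1).mono hsub

lemma symm_witness {r : ℕ} {A : Fin r → Set S2} (σ : E3 ≃ₗᵢ[ℝ] E3) (P Q : Set (Fin r))
    (h : IsMeagre (symmDiff (sphereMap σ '' UU A P) (UU A Q))) :
    IsMeagre (symmDiff (sphereMap σ.symm '' UU A Q) (UU A P)) := by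
  have hgg : ∀ x : S2, sphereMap σ (sphereMap σ.symm x) = x :=
    fun x => Subtype.ext (σ.apply_symm_apply x.1)
  have hgg' : ∀ x : S2, sphereMap σ.symm (sphereMap σ x) = x :=
    fun x => Subtype.ext (σ.symm_apply_apply x.1)
  have heq : symmDiff (sphereMap σ.symm '' UU A Q) (UU A P)
      = sphereMap σ ⁻¹' (symmDiff (sphereMap σ '' UU A P) (UU A Q)) := by
    ext x
    have h1 : x ∈ sphereMap σ.symm '' UU A Q ↔ sphereMap σ x ∈ UU A Q := by
      constructor
      · rintro ⟨y, hy, rfl⟩; rwa [hgg y]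
      · intro hx; exact ⟨sphereMap σ x, hx, hgg' x⟩
    have h2 : x ∈ UU A P ↔ sphereMap σ x ∈ sphereMap σ '' UU A P :=
      ((sphereMap_bijective σ).1.mem_set_image).symm
    simp only [Set.mem_symmDiff, Set.mem_preimage]
    tauto
  rw [heq, symmDiff_comm] at *
  exact h.preimage_of_isOpenMap (sphereIso σ).toHomeomorph.continuous
    (sphereIso σ).toHomeomorph.isOpenMap

lemma subcong_meagre {r m : ℕ} (L R : Fin m → Set (Fin r)) {A : Fin r → Set S2}
    (hqd : ∀ k k', k ≠ k' → IsMeagre (A k ∩ A k'))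
    (hcover : (⋃ k, A k) ∈ residual S2)
    (hwit : ∀ i, ∃ σ : E3 ≃ₗᵢ[ℝ] E3,
      IsMeagre (symmDiff (sphereMap σ '' UU A (L i)) (UU A (R i))))
    {B C : Set (Fin r)} (h : SubCong L R B C) :
    ∃ σ : E3 ≃ₗᵢ[ℝ] E3, IsMeagre (sphereMap σ '' UU A B \ UU A C) := by
  induction h with
  | @subset B C hBC =>
    refine ⟨LinearIsometryEquiv.refl ℝ E3, ?_⟩
    have hid : sphereMap (LinearIsometryEquiv.refl ℝ E3) = id :=
      funext fun x => Subtype.ext rfl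
    rw [hid, Set.image_id, Set.diff_eq_empty.mpr (UU_mono hBC)]
    exact IsMeagre.empty
  | @trans B Y C h1 h2 ih1 ih2 =>
    obtain ⟨σ, hσ⟩ := ih1
    obtain ⟨τ, hτ⟩ := ih2
    refine ⟨σ.trans τ, ?_⟩
    have hcomp : ∀ x, sphereMap (σ.trans τ) x = sphereMap τ (sphereMap σ x) :=
      fun x => Subtype.ext (σ.trans_apply τ x.1)
    have hsub : sphereMap (σ.trans τ) '' UU A B \ UU A C ⊆
        (sphereMap τ '' (sphereMap σ '' UU A B \ UU A Y)) ∪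
          (sphereMap τ '' UU A Y \ UU A C) := by
      rintro x ⟨⟨b, hb, rfl⟩, hxC⟩
      rw [hcomp b] at hxC ⊢
      by_cases hc : sphereMap σ b ∈ UU A Y
      · exact Or.inr ⟨⟨sphereMap σ b, hc, rfl⟩, hxC⟩
      · exact Or.inl ⟨sphereMap σ b, ⟨⟨b, hb, rfl⟩, hc⟩, rfl⟩
    exact ((isMeagre_image_sphereMap τ hσ).union' hτ).mono hsub
  | lr i =>
    obtain ⟨σ, hw⟩ := hwit i
    exact ⟨σ, (witness_diffs hqd hcover _ _ σ hw).1⟩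
  | rl i =>
    obtain ⟨σ, hw⟩ := hwit i
    exact ⟨σ.symm, (witness_diffs hqd hcover _ _ σ.symm (symm_witness σ _ _ hw)).1⟩
  | lrc i =>
    obtain ⟨σ, hw⟩ := hwit i
    exact ⟨σ, (witness_diffs hqd hcover _ _ σ hw).2⟩
  | rlc i =>
    obtain ⟨σ, hw⟩ := hwit i
    exact ⟨σ.symm, (witness_diffs hqd hcover _ _ σ.symm (symm_witness σ _ _ hw)).2⟩


/-- If a system of congruences has a quasi-solution in `S²` consisting of nonempty open sets,
with witnesses isometries of `S²` (restrictions of elements of O(3)), then the system is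
consistent. -/
theorem stmt_8 {r m : ℕ} (L R : Fin m → Set (Fin r))
    (A : Fin r → Set S2)
    (hopen : ∀ k, IsOpen (A k)) (hne : ∀ k, (A k).Nonempty)
    (hqd : ∀ k k', k ≠ k' → IsMeagre (A k ∩ A k'))
    (hcover : (⋃ k, A k) ∈ residual S2)
    (hwit : ∀ i, ∃ σ : E3 ≃ₗᵢ[ℝ] E3,
      IsMeagre (symmDiff (sphereMap σ '' ⋃ k ∈ L i, A k) (⋃ k ∈ R i, A k))) :
    SysConsistent L R := by
  intro P Q hsub hPQ
  obtain ⟨σ, hM⟩ := subcong_meagre L R hqd hcover hwit hsub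
  obtain ⟨k, hkP, hkQ⟩ := Set.exists_of_ssubset hPQ
  have hQP : UU A Q ⊆ UU A P := UU_mono hPQ.subset
  -- Step 1: the image of `UU A P` is contained in the closure of `UU A Q`.
  have step1 : sphereMap σ '' UU A P ⊆ closure (UU A Q) := by
    intro x hx
    by_contra hxc
    have hOopen : IsOpen ((sphereMap σ '' UU A P) ∩ (closure (UU A Q))ᶜ) :=
      (((sphereIso σ).toHomeomorph.isOpenMap _ (isOpen_UU hopen P))).inter
        isClosed_closure.isOpen_compl
    refine not_isMeagre_open hOopen ⟨x, hx, hxc⟩ (hM.mono ?_)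
    rintro y ⟨hy1, hy2⟩
    exact ⟨hy1, fun hy3 => hy2 (subset_closure hy3)⟩
  have step2 : sphereMap σ '' closure (UU A P) ⊆ closure (UU A Q) :=
    (image_closure_subset_closure_image (sphereIso σ).continuous).trans
      (closure_minimal step1 isClosed_closure)
  have step3 : closure (UU A Q) ⊆ closure (UU A P) := closure_mono hQP
  have hcl : closure (UU A P) ⊆ closure (UU A Q) :=
    key_iso (sphereIso σ).isometry isClosed_closure step2 step3
  -- derive the contradiction using the piece `A k`
  obtain ⟨x, hx⟩ := hne k
  have hxcl : x ∈ closure (UU A Q) := by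
    refine hcl (subset_closure ?_)
    exact mem_iUnion.mpr ⟨k, mem_iUnion.mpr ⟨hkP, hx⟩⟩
  have hnon : (A k ∩ UU A Q).Nonempty := by
    rw [mem_closure_iff] at hxcl
    obtain ⟨y, hy1, hy2⟩ := hxcl (A k) (hopen k) hx
    exact ⟨y, hy1, hy2⟩
  have hmeag : IsMeagre (A k ∩ UU A Q) := by
    refine (meagre_UU_inter hqd (Set.disjoint_singleton_left.mpr hkQ)).mono ?_
    rintro y ⟨hy1, hy2⟩
    exact ⟨mem_iUnion.mpr ⟨k, mem_iUnion.mpr ⟨rfl, hy1⟩⟩, hy2⟩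
  exact not_isMeagre_open ((hopen k).inter (isOpen_UU hopen Q)) hnon hmeag
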